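/- For x > 0, the complementary error function satisfies 2 e^{−x²}/(√π (x + √(x²+2))) ≤ erfc(x) ≤ 2 e^{−x²}/(√π (x + √(x² + 4/π))). -/

import Mathlib

/-- Complementary error function `erfc(x) = (2/√π) ∫_x^∞ e^{−s²} ds`. -/
noncomputable def erfc (x : ℝ) : ℝ :=
  (2 / Real.sqrt Real.pi) * ∫ s in Set.Ioi x, Real.exp (-(s^2))

open Set MeasureTheory Filter

noncomputable def kf (s : ℝ) : ℝ := Real.exp (-(s^2))
noncomputable def ktail (x : ℝ) : ℝ := ∫ s in Set.Ioi x, kf s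
noncomputable def ku (c x : ℝ) : ℝ := Real.sqrt (x^2 + c)
noncomputable def kF (c x : ℝ) : ℝ := ktail x - kf x * (ku c x - x) / c

lemma kf_cont : Continuous kf := by
  exact Real.continuous_exp.comp (Continuous.neg (continuous_pow 2))

lemma kf_integrable : Integrable kf := by
  have := integrable_exp_neg_mul_sq (b := 1) one_pos
  have h : Integrable (fun s : ℝ => Real.exp (-(s^2))) := by simpa using this
  exact h

lemma ktail_eq (x : ℝ) : ktail x = (∫ s, kf s) - ∫ s in Set.Iic x, kf s := by
  have h := intervalIntegral.integral_Iic_add_Ioi (μ := volume) (b := x)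
    kf_integrable.integrableOn kf_integrable.integrableOn
  rw [ktail]; linarith

lemma ktail_tendsto : Tendsto ktail atTop (nhds 0) := by
  have hcov : AECover (volume : Measure ℝ) atTop (fun i : ℝ => Iic i) :=
    aecover_Iic tendsto_id
  have h := hcov.integral_tendsto_of_countably_generated kf_integrable
  have : Tendsto (fun x => (∫ s, kf s) - ∫ s in Iic x, kf s) atTop (nhds ((∫ s, kf s) - ∫ s, kf s)) :=
    tendsto_const_nhds.sub h
  simp only [sub_self] at this
  exact this.congr (fun x => (ktail_eq x).symm)

lemma ktail_hasDeriv (x : ℝ) : HasDerivAt ktail (-(kf x)) x := by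
  have heq : ∀ y : ℝ, ktail y = ((∫ s, kf s) - ∫ s in Set.Iic (0:ℝ), kf s) - ∫ s in (0:ℝ)..y, kf s := by
    intro y
    have h := intervalIntegral.integral_Iic_sub_Iic (μ := volume) (f := kf)
      kf_integrable.integrableOn kf_integrable.integrableOn (a := 0) (b := y)
    rw [ktail_eq]; linarith
  have hd : HasDerivAt (fun y => ∫ s in (0:ℝ)..y, kf s) (kf x) x :=
    intervalIntegral.integral_hasDerivAt_right (kf_cont.intervalIntegrable _ _)
      (kf_cont.stronglyMeasurableAtFilter _ _) kf_cont.continuousAt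
  have := (hd.const_sub ((∫ s, kf s) - ∫ s in Set.Iic (0:ℝ), kf s))
  exact this.congr_of_eventuallyEq (Eventually.of_forall heq) |>.congr_deriv rfl

lemma ku_pos {c : ℝ} (hc : 0 < c) (x : ℝ) : 0 < ku c x :=
  Real.sqrt_pos.2 (by positivity)

lemma ku_sq {c : ℝ} (hc : 0 < c) (x : ℝ) : ku c x ^ 2 = x^2 + c := by
  rw [ku, Real.sq_sqrt]; positivity

lemma kf_hasDeriv (x : ℝ) : HasDerivAt kf (-(2*x) * kf x) x := by
  have h2 : HasDerivAt (fun y : ℝ => -(y^2)) (-(2*x)) x := by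
    have h := (hasDerivAt_pow 2 x).neg
    simp at h
    exact h
  have := (Real.hasDerivAt_exp (-(x^2))).comp x h2
  have h3 : HasDerivAt (fun s : ℝ => Real.exp (-(s^2))) (-(2*x) * kf x) x := by
    simpa [kf, mul_comm, Function.comp_def] using this
  exact h3

lemma ku_hasDeriv {c : ℝ} (hc : 0 < c) (x : ℝ) : HasDerivAt (ku c) (x / ku c x) x := by
  have h1 : HasDerivAt (fun y : ℝ => y^2 + c) (2*x) x := by
    simpa using (hasDerivAt_pow 2 x).add_const c
  have h0 : (x:ℝ)^2 + c ≠ 0 := by positivity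
  have := (Real.hasDerivAt_sqrt h0).comp x h1
  have h2 : HasDerivAt (ku c) (1/(2*Real.sqrt (x^2+c)) * (2*x)) x := this
  convert h2 using 1
  rw [ku]
  field_simp

lemma kF_hasDeriv {c : ℝ} (hc : 0 < c) (x : ℝ) :
    HasDerivAt (kF c)
      (-(kf x) * ((2*x^2*(ku c x - x) + (c-1)*ku c x + (1-2*c)*x) / (c * ku c x))) x := by
  have hu0 : 0 < ku c x := ku_pos hc x
  have hu2 : ku c x ^ 2 = x^2 + c := ku_sq hc x
  have hG : HasDerivAt (fun y => kf y * (ku c y - y) / c)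
      (((-(2*x) * kf x) * (ku c x - x) + kf x * (x / ku c x - 1)) / c) x :=
    (((kf_hasDeriv x).mul ((ku_hasDeriv hc x).sub (hasDerivAt_id x))).div_const c)
  have h := (ktail_hasDeriv x).sub hG
  have heq : (ktail - fun y => kf y * (ku c y - y) / c) = kF c := rfl
  rw [heq] at h
  replace h : HasDerivAt (kF c) _ x := h
  convert h using 1
  field_simp
  linear_combination (-(2*kf x*x)) * hu2

lemma kB_c2 (x : ℝ) (hx : 0 ≤ x) :
    0 ≤ 2*x^2*(ku 2 x - x) + (2-1)*ku 2 x + (1-2*2)*x := by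
  have hu0 := ku_pos two_pos x
  have hu2 := ku_sq two_pos x
  have hu2' : (2*x^2+1)^2 * ku 2 x^2 = (2*x^2+1)^2 * (x^2+2) := by rw [hu2]
  have hL : 0 ≤ (2*x^2+1) * ku 2 x := by positivity
  have hR : 0 ≤ 2*x^3+3*x := by nlinarith [pow_nonneg hx 3]
  have hsq : (2*x^3+3*x)^2 ≤ ((2*x^2+1) * ku 2 x)^2 := by nlinarith [hu2']
  have hLR : 2*x^3+3*x ≤ (2*x^2+1) * ku 2 x :=
    (pow_le_pow_iff_left₀ hR hL two_ne_zero).mp hsq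
  nlinarith [hLR]

lemma kB_left {c x : ℝ} (hc1 : 1 < c) (hc2 : c < 2) (hx : 0 ≤ x)
    (hy : (2-c)*x^2 ≤ (c-1)^2) :
    0 ≤ 2*x^2*(ku c x - x) + (c-1)*ku c x + (1-2*c)*x := by
  have hc0 : (0:ℝ) < c := by linarith
  have hu0 := ku_pos hc0 x
  have hu2 := ku_sq hc0 x
  have hu2' : (2*x^2+c-1)^2 * ku c x^2 = (2*x^2+c-1)^2 * (x^2+c) := by rw [hu2]
  have hL : 0 ≤ (2*x^2+c-1) * ku c x := by
    apply mul_nonneg _ hu0.le; nlinarith [sq_nonneg x]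
  have hR : 0 ≤ (2*x^2+2*c-1)*x := by
    apply mul_nonneg _ hx; nlinarith [sq_nonneg x]
  have key : (0:ℝ) ≤ c * ((c-1)^2 - (2-c)*x^2) :=
    mul_nonneg hc0.le (by linarith)
  have hsq : ((2*x^2+2*c-1)*x)^2 ≤ ((2*x^2+c-1) * ku c x)^2 := by nlinarith [hu2']
  have hLR : (2*x^2+2*c-1)*x ≤ (2*x^2+c-1) * ku c x :=
    (pow_le_pow_iff_left₀ hR hL two_ne_zero).mp hsq
  nlinarith [hLR]

lemma kB_right {c x : ℝ} (hc1 : 1 < c) (hc2 : c < 2) (hx : 0 ≤ x)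
    (hy : (c-1)^2 ≤ (2-c)*x^2) :
    2*x^2*(ku c x - x) + (c-1)*ku c x + (1-2*c)*x ≤ 0 := by
  have hc0 : (0:ℝ) < c := by linarith
  have hu0 := ku_pos hc0 x
  have hu2 := ku_sq hc0 x
  have hu2' : (2*x^2+c-1)^2 * ku c x^2 = (2*x^2+c-1)^2 * (x^2+c) := by rw [hu2]
  have hL : 0 ≤ (2*x^2+c-1) * ku c x := by
    apply mul_nonneg _ hu0.le; nlinarith [sq_nonneg x]
  have hR : 0 ≤ (2*x^2+2*c-1)*x := by
    apply mul_nonneg _ hx; nlinarith [sq_nonneg x]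
  have key : (0:ℝ) ≤ c * ((2-c)*x^2 - (c-1)^2) :=
    mul_nonneg hc0.le (by linarith)
  have hsq : ((2*x^2+c-1) * ku c x)^2 ≤ ((2*x^2+2*c-1)*x)^2 := by nlinarith [hu2']
  have hLR : (2*x^2+c-1) * ku c x ≤ (2*x^2+2*c-1)*x :=
    (pow_le_pow_iff_left₀ hL hR two_ne_zero).mp hsq
  nlinarith [hLR]

lemma kf_pos (x : ℝ) : 0 < kf x := Real.exp_pos _

lemma kF_tendsto {c : ℝ} (hc : 0 < c) : Tendsto (kF c) atTop (nhds 0) := by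
  have h2 : Tendsto (fun x => kf x * (ku c x - x) / c) atTop (nhds 0) := by
    have hexp : Tendsto kf atTop (nhds 0) := by
      have h1 : Tendsto (fun x : ℝ => -(x^2)) atTop atBot := by
        apply Filter.tendsto_neg_atBot_iff.mpr
        exact tendsto_pow_atTop two_ne_zero
      exact Real.tendsto_exp_atBot.comp h1
    have hb : Tendsto (fun x => kf x * (Real.sqrt c / c)) atTop (nhds 0) := by
      simpa using hexp.mul_const (Real.sqrt c / c)
    apply tendsto_of_tendsto_of_tendsto_of_le_of_le' tendsto_const_nhds hb
    · filter_upwards [eventually_ge_atTop (0:ℝ)] with x hx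
      have hxu : x ≤ ku c x := by
        rw [ku, show x = Real.sqrt (x^2) from (Real.sqrt_sq hx).symm]
        exact Real.sqrt_le_sqrt (by nlinarith [Real.sqrt_sq hx])
      exact div_nonneg (mul_nonneg (kf_pos x).le (by linarith)) hc.le
    · filter_upwards [eventually_ge_atTop (0:ℝ)] with x hx
      have huc : ku c x - x ≤ Real.sqrt c := by
        have h1 : ku c x ≤ x + Real.sqrt c := by
          rw [ku, show x + Real.sqrt c = Real.sqrt ((x + Real.sqrt c)^2) from
            (Real.sqrt_sq (by positivity)).symm]
          apply Real.sqrt_le_sqrt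
          nlinarith [Real.sq_sqrt hc.le, Real.sqrt_nonneg c, mul_nonneg hx (Real.sqrt_nonneg c)]
        linarith
      rw [← mul_div_assoc]
      gcongr
      exact (kf_pos x).le
  have := ktail_tendsto.sub h2
  rw [sub_zero] at this
  exact this

lemma ktail_zero : ktail 0 = Real.sqrt Real.pi / 2 := by
  have := integral_gaussian_Ioi 1
  rw [ktail]
  simp only [kf]
  rw [show (fun s : ℝ => Real.exp (-(s^2))) = fun s : ℝ => Real.exp (-1 * s^2) by
    funext s; ring_nf] at *
  simpa using this

lemma kF_deriv_nonpos {c : ℝ} (hc : 0 < c) {y : ℝ}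
    (hB : 0 ≤ 2*y^2*(ku c y - y) + (c-1)*ku c y + (1-2*c)*y) :
    deriv (kF c) y ≤ 0 := by
  rw [(kF_hasDeriv hc y).deriv, neg_mul]
  have hu0 := ku_pos hc y
  exact neg_nonpos.mpr (mul_nonneg (kf_pos y).le (div_nonneg hB (by positivity)))

lemma kF_deriv_nonneg {c : ℝ} (hc : 0 < c) {y : ℝ}
    (hB : 2*y^2*(ku c y - y) + (c-1)*ku c y + (1-2*c)*y ≤ 0) :
    0 ≤ deriv (kF c) y := by
  rw [(kF_hasDeriv hc y).deriv, neg_mul]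
  have hu0 := ku_pos hc y
  exact neg_nonneg.mpr (mul_nonpos_of_nonneg_of_nonpos (kf_pos y).le
    (div_nonpos_of_nonpos_of_nonneg hB (by positivity)))

lemma kF2_antitone : AntitoneOn (kF 2) (Set.Ici 0) := by
  apply antitoneOn_of_deriv_nonpos (convex_Ici 0)
  · exact fun y _ => (kF_hasDeriv two_pos y).differentiableAt.continuousAt.continuousWithinAt
  · exact fun y _ => (kF_hasDeriv two_pos y).differentiableAt.differentiableWithinAt
  · intro y hy
    rw [interior_Ici] at hy
    exact kF_deriv_nonpos two_pos (kB_c2 y hy.le)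

lemma kF_lower (x : ℝ) (hx : 0 ≤ x) : 0 ≤ kF 2 x := by
  apply le_of_tendsto (kF_tendsto two_pos)
  filter_upwards [eventually_ge_atTop x] with y hy
  exact kF2_antitone hx (le_trans hx hy) hy

lemma kc1 : 1 < 4 / Real.pi :=
  (one_lt_div Real.pi_pos).mpr (by linarith [Real.pi_lt_d2])

lemma kc2 : 4 / Real.pi < 2 :=
  (div_lt_iff₀ Real.pi_pos).mpr (by linarith [Real.pi_gt_three])

lemma kF_zero : kF (4/Real.pi) 0 = 0 := by
  have hc0 : (0:ℝ) < 4/Real.pi := by linarith [kc1]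
  have hsπ : Real.sqrt Real.pi ^ 2 = Real.pi := Real.sq_sqrt Real.pi_pos.le
  have hsπ0 : 0 < Real.sqrt Real.pi := Real.sqrt_pos.2 Real.pi_pos
  have h4 : Real.sqrt (4/Real.pi) = 2 / Real.sqrt Real.pi := by
    rw [show (4:ℝ)/Real.pi = (2/Real.sqrt Real.pi)^2 by rw [div_pow, hsπ]; norm_num]
    exact Real.sqrt_sq (by positivity)
  have hku : ku (4/Real.pi) 0 = Real.sqrt (4/Real.pi) := by
    rw [ku]; norm_num
  have hkf : kf 0 = 1 := by simp [kf]
  rw [kF, ktail_zero, hkf, hku, h4]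
  field_simp
  linear_combination 4*hsπ

lemma kF_upper (x : ℝ) (hx : 0 ≤ x) : kF (4/Real.pi) x ≤ 0 := by
  set c := 4/Real.pi with hc
  have hc1 := kc1
  have hc2 := kc2
  have hc0 : (0:ℝ) < c := by linarith
  set x1 := Real.sqrt ((c-1)^2/(2-c)) with hx1
  have hx1n : 0 ≤ x1 := Real.sqrt_nonneg _
  have hx1sq : x1^2 = (c-1)^2/(2-c) :=
    Real.sq_sqrt (div_nonneg (sq_nonneg _) (by linarith))
  rcases le_or_gt x x1 with h | h
  · -- antitone on Icc 0 x1, so kF x ≤ kF 0 = 0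
    have hanti : AntitoneOn (kF c) (Set.Icc 0 x1) := by
      apply antitoneOn_of_deriv_nonpos (convex_Icc 0 x1)
      · exact fun y _ => (kF_hasDeriv hc0 y).differentiableAt.continuousAt.continuousWithinAt
      · exact fun y _ => (kF_hasDeriv hc0 y).differentiableAt.differentiableWithinAt
      · intro y hy
        rw [interior_Icc] at hy
        apply kF_deriv_nonpos hc0
        apply kB_left hc1 hc2 hy.1.le
        have hysq : y^2 ≤ x1^2 := pow_le_pow_left₀ hy.1.le hy.2.le 2
        rw [hx1sq] at hysq
        have h2 := (le_div_iff₀ (by linarith : (0:ℝ) < 2-c)).mp hysq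
        linarith [h2, sq_nonneg y]
    have := hanti (Set.mem_Icc.mpr ⟨le_refl 0, hx1n⟩) (Set.mem_Icc.mpr ⟨hx, h⟩) hx
    rwa [kF_zero] at this
  · -- monotone on Ici x1, tendsto 0, so kF x ≤ 0
    have hmono : MonotoneOn (kF c) (Set.Ici x1) := by
      apply monotoneOn_of_deriv_nonneg (convex_Ici x1)
      · exact fun y _ => (kF_hasDeriv hc0 y).differentiableAt.continuousAt.continuousWithinAt
      · exact fun y _ => (kF_hasDeriv hc0 y).differentiableAt.differentiableWithinAt
      · intro y hy
        rw [interior_Ici] at hy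
        have hy0 : 0 ≤ y := le_trans hx1n hy.le
        apply kF_deriv_nonneg hc0
        apply kB_right hc1 hc2 hy0
        have hysq : x1^2 ≤ y^2 := pow_le_pow_left₀ hx1n hy.le 2
        rw [hx1sq] at hysq
        have h2 := (div_le_iff₀ (by linarith : (0:ℝ) < 2-c)).mp hysq
        linarith [h2]
    apply ge_of_tendsto (kF_tendsto hc0)
    filter_upwards [eventually_ge_atTop x] with y hy
    exact hmono (le_of_lt h) (le_trans h.le hy) hy

theorem stmt5' (x : ℝ) (hx : 0 < x) :
    2 * Real.exp (-(x^2)) / (Real.sqrt Real.pi * (x + Real.sqrt (x^2 + 2)))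
        ≤ (2 / Real.sqrt Real.pi) * ktail x ∧
    (2 / Real.sqrt Real.pi) * ktail x ≤
      2 * Real.exp (-(x^2)) /
        (Real.sqrt Real.pi * (x + Real.sqrt (x^2 + 4/Real.pi))) := by
  have hsπ : Real.sqrt Real.pi ^ 2 = Real.pi := Real.sq_sqrt Real.pi_pos.le
  have hsπ0 : 0 < Real.sqrt Real.pi := Real.sqrt_pos.2 Real.pi_pos
  have hc0 : (0:ℝ) < 4/Real.pi := by linarith [kc1]
  constructor
  · have h := kF_lower x hx.le
    rw [kF, sub_nonneg] at h
    have hu0 := ku_pos two_pos x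
    have hu2 := ku_sq two_pos x
    have heq : 2 * Real.exp (-(x^2)) / (Real.sqrt Real.pi * (x + Real.sqrt (x^2 + 2)))
        = (2 / Real.sqrt Real.pi) * (kf x * (ku 2 x - x) / 2) := by
      rw [show Real.sqrt (x^2+2) = ku 2 x from rfl, show Real.exp (-(x^2)) = kf x from rfl]
      have hxu : 0 < x + ku 2 x := by linarith
      field_simp
      linear_combination (-kf x)*hu2
    rw [heq]
    exact mul_le_mul_of_nonneg_left h (by positivity)
  · have h := kF_upper x hx.le
    rw [kF, sub_nonpos] at h
    have hu0 := ku_pos hc0 x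
    have hu2 := ku_sq hc0 x
    have heq : 2 * Real.exp (-(x^2)) / (Real.sqrt Real.pi * (x + Real.sqrt (x^2 + 4/Real.pi)))
        = (2 / Real.sqrt Real.pi) * (kf x * (ku (4/Real.pi) x - x) / (4/Real.pi)) := by
      rw [show Real.sqrt (x^2+4/Real.pi) = ku (4/Real.pi) x from rfl,
        show Real.exp (-(x^2)) = kf x from rfl]
      have hxu : 0 < x + ku (4/Real.pi) x := by linarith
      field_simp
      have hππ : Real.pi * Real.pi⁻¹ = 1 := mul_inv_cancel₀ Real.pi_ne_zero
      linear_combination (-kf x*Real.pi)*hu2 + (-4*kf x)*hππ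
    rw [heq]
    exact mul_le_mul_of_nonneg_left h (by positivity)

/-- Two-sided Komatsu-type bounds on the Gaussian tail: for `x > 0`,
`2e^{−x²}/(√π(x+√(x²+2))) ≤ erfc(x) ≤ 2e^{−x²}/(√π(x+√(x²+4/π)))`. -/
theorem stmt5 (x : ℝ) (hx : 0 < x) :
    2 * Real.exp (-(x^2)) / (Real.sqrt Real.pi * (x + Real.sqrt (x^2 + 2)))
        ≤ erfc x ∧
    erfc x ≤
      2 * Real.exp (-(x^2)) /
        (Real.sqrt Real.pi * (x + Real.sqrt (x^2 + 4/Real.pi))) := by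
  exact stmt5' x hx
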